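/- With the setup of the Euclidean discrete conformal deformation (l_i = e^{u_j+u_k} l_i⁰ etc., satisfying strict triangle inequalities, angles from the cosine law), one has ∂θ_i/∂u_i = -cot θ_j - cot θ_k. -/

import Mathlib

noncomputable def angOpp (a b c : ℝ) : ℝ := Real.arccos ((b ^ 2 + c ^ 2 - a ^ 2) / (2 * b * c))

lemma tri_sqrt_aux (a b c : ℝ) (ha : 0 < a) (hb : 0 < b) (hc : 0 < c)
    (h1 : b + c > a) (h2 : c + a > b) (h3 : a + b > c) :
    Real.sqrt (1 - ((b ^ 2 + c ^ 2 - a ^ 2) / (2 * b * c)) ^ 2)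
      = Real.sqrt ((a + b + c) * (-a + b + c) * (a - b + c) * (a + b - c)) / (2 * b * c) := by
  have hbc : (0:ℝ) < 2 * b * c := by positivity
  have hQ : 1 - ((b ^ 2 + c ^ 2 - a ^ 2) / (2 * b * c)) ^ 2
      = ((a + b + c) * (-a + b + c) * (a - b + c) * (a + b - c)) / (2 * b * c) ^ 2 := by
    field_simp; ring
  have hQpos : (0:ℝ) ≤ (a + b + c) * (-a + b + c) * (a - b + c) * (a + b - c) := by
    have f1 : (0:ℝ) < a + b + c := by linarith
    have f2 : (0:ℝ) < -a + b + c := by linarith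
    have f3 : (0:ℝ) < a - b + c := by linarith
    have f4 : (0:ℝ) < a + b - c := by linarith
    positivity
  rw [hQ, Real.sqrt_div hQpos, Real.sqrt_sq hbc.le]

lemma cos_angOpp (a b c : ℝ) (ha : 0 < a) (hb : 0 < b) (hc : 0 < c)
    (h1 : b + c > a) (h2 : c + a > b) (h3 : a + b > c) :
    Real.cos (angOpp a b c) = (b ^ 2 + c ^ 2 - a ^ 2) / (2 * b * c) := by
  have hbc : (0:ℝ) < 2 * b * c := by positivity
  apply Real.cos_arccos
  · rw [le_div_iff₀ hbc]; nlinarith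
  · rw [div_le_one hbc]; nlinarith

lemma sin_angOpp (a b c : ℝ) (ha : 0 < a) (hb : 0 < b) (hc : 0 < c)
    (h1 : b + c > a) (h2 : c + a > b) (h3 : a + b > c) :
    Real.sin (angOpp a b c)
      = Real.sqrt ((a + b + c) * (-a + b + c) * (a - b + c) * (a + b - c)) / (2 * b * c) := by
  rw [angOpp, Real.sin_arccos, tri_sqrt_aux a b c ha hb hc h1 h2 h3]

/-- Euclidean discrete conformal deformation: `∂θ_i/∂u_i = -cot θ_j - cot θ_k`. -/
theorem yamabe_dtheta_i_du_i
    (li0 lj0 lk0 : ℝ) (hli0 : 0 < li0) (hlj0 : 0 < lj0) (hlk0 : 0 < lk0)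
    (ui uj uk : ℝ)
    (li lj lk : ℝ)
    (hli : li = Real.exp (uj + uk) * li0)
    (hlj : lj = Real.exp (ui + uk) * lj0)
    (hlk : lk = Real.exp (ui + uj) * lk0)
    (h1 : li + lj > lk) (h2 : lj + lk > li) (h3 : lk + li > lj) :
    HasDerivAt
      (fun t : ℝ => angOpp (Real.exp (uj + uk) * li0) (Real.exp (t + uk) * lj0)
        (Real.exp (t + uj) * lk0))
      (-(Real.cos (angOpp lj lk li) / Real.sin (angOpp lj lk li))
        - Real.cos (angOpp lk li lj) / Real.sin (angOpp lk li lj)) ui := by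
  have hlip : 0 < li := by rw [hli]; positivity
  have hljp : 0 < lj := by rw [hlj]; positivity
  have hlkp : 0 < lk := by rw [hlk]; positivity
  set Q : ℝ := (li + lj + lk) * (-li + lj + lk) * (li - lj + lk) * (li + lj - lk) with hQdef
  have hQpos : 0 < Q := by
    have f1 : (0:ℝ) < li + lj + lk := by linarith
    have f2 : (0:ℝ) < -li + lj + lk := by linarith
    have f3 : (0:ℝ) < li - lj + lk := by linarith
    have f4 : (0:ℝ) < li + lj - lk := by linarith
    positivity
  have hsQ : 0 < Real.sqrt Q := Real.sqrt_pos.mpr hQpos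
  -- inner function
  have hb : HasDerivAt (fun t : ℝ => Real.exp (t + uk) * lj0) lj ui := by
    have : HasDerivAt (fun t : ℝ => Real.exp (t + uk)) (Real.exp (ui + uk)) ui := by
      simpa using (((hasDerivAt_id ui).add_const uk).exp)
    simpa [hlj] using this.mul_const lj0
  have hc : HasDerivAt (fun t : ℝ => Real.exp (t + uj) * lk0) lk ui := by
    have : HasDerivAt (fun t : ℝ => Real.exp (t + uj)) (Real.exp (ui + uj)) ui := by
      simpa using (((hasDerivAt_id ui).add_const uj).exp)
    simpa [hlk] using this.mul_const lk0
  have hbv : Real.exp (ui + uk) * lj0 = lj := hlj.symm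
  have hcv : Real.exp (ui + uj) * lk0 = lk := hlk.symm
  have hav : Real.exp (uj + uk) * li0 = li := hli.symm
  have hN : HasDerivAt
      (fun t : ℝ => (Real.exp (t + uk) * lj0) ^ 2 + (Real.exp (t + uj) * lk0) ^ 2
        - (Real.exp (uj + uk) * li0) ^ 2)
      (2 * lj * lj + 2 * lk * lk) ui := by
    have := ((hb.pow 2).add (hc.pow 2)).sub_const ((Real.exp (uj + uk) * li0) ^ 2)
    simpa [hbv, hcv, pow_one] using this
  have hD : HasDerivAt
      (fun t : ℝ => 2 * (Real.exp (t + uk) * lj0) * (Real.exp (t + uj) * lk0))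
      (2 * lj * lk + 2 * lj * lk) ui := by
    have := ((hb.const_mul 2).mul hc)
    exact this.congr_deriv (by rw [hbv, hcv])
  have hDne : 2 * (Real.exp (ui + uk) * lj0) * (Real.exp (ui + uj) * lk0) ≠ 0 := by
    rw [hbv, hcv]; positivity
  have hinner := hN.div hD hDne
  -- value of inner function at ui
  have hval : ((Real.exp (ui + uk) * lj0) ^ 2 + (Real.exp (ui + uj) * lk0) ^ 2
      - (Real.exp (uj + uk) * li0) ^ 2) / (2 * (Real.exp (ui + uk) * lj0) * (Real.exp (ui + uj) * lk0))
      = (lj ^ 2 + lk ^ 2 - li ^ 2) / (2 * lj * lk) := by rw [hbv, hcv, hav]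
  have hne1 : (lj ^ 2 + lk ^ 2 - li ^ 2) / (2 * lj * lk) ≠ -1 := by
    have hbc : (0:ℝ) < 2 * lj * lk := by positivity
    intro h
    have := (div_eq_iff hbc.ne').mp h
    nlinarith
  have hne2 : (lj ^ 2 + lk ^ 2 - li ^ 2) / (2 * lj * lk) ≠ 1 := by
    have hbc : (0:ℝ) < 2 * lj * lk := by positivity
    intro h
    have := (div_eq_iff hbc.ne').mp h
    nlinarith
  have harc := Real.hasDerivAt_arccos hne1 hne2
  have hcomp := HasDerivAt.comp ui (hval ▸ harc) hinner
  convert hcomp using 1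
  any_goals rfl
  -- derivative values equal
  have hsq : Real.sqrt (1 - ((lj ^ 2 + lk ^ 2 - li ^ 2) / (2 * lj * lk)) ^ 2)
      = Real.sqrt Q / (2 * lj * lk) := by
    have := tri_sqrt_aux li lj lk hlip hljp hlkp (by linarith) (by linarith) (by linarith)
    rw [this, hQdef]
  have hsinj : Real.sin (angOpp lj lk li) = Real.sqrt Q / (2 * lk * li) := by
    rw [sin_angOpp lj lk li hljp hlkp hlip (by linarith) (by linarith) (by linarith)]
    congr 1; rw [hQdef]; ring
  have hcosj : Real.cos (angOpp lj lk li) = (lk ^ 2 + li ^ 2 - lj ^ 2) / (2 * lk * li) :=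
    cos_angOpp lj lk li hljp hlkp hlip (by linarith) (by linarith) (by linarith)
  have hsink : Real.sin (angOpp lk li lj) = Real.sqrt Q / (2 * li * lj) := by
    rw [sin_angOpp lk li lj hlkp hlip hljp (by linarith) (by linarith) (by linarith)]
    congr 1; rw [hQdef]; ring
  have hcosk : Real.cos (angOpp lk li lj) = (li ^ 2 + lj ^ 2 - lk ^ 2) / (2 * li * lj) :=
    cos_angOpp lk li lj hlkp hlip hljp (by linarith) (by linarith) (by linarith)
  rw [hcosj, hsinj, hcosk, hsink, hval, hbv, hcv, hav, hsq]
  field_simp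
  ring
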